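/- Refined primal inequality (Proposition 5, second part): Assume for each i there is a function γ_i(·) ≥ 0 such that for all a, b ∈ ℝ and every u ∈ ∂φ_i*(−b), φ_i*(−a) − φ_i*(−b) + u(a−b) ≥ γ_i(u)·(a−b)². Set γ_i = γ_i(w*ᵀx_i). Then for every w ∈ ℝ^d, every index i, and every a_i ∈ ℝ with −a_i ∈ ∂φ_i(wᵀx_i), one has |(w* − w)ᵀx_i| ≥ γ_i |a_i − α*_i|. -/
import Mathlib


open scoped BigOperators RealInnerProductSpace
open Finset

/-- The convex conjugate `φ*(u) = sup_z (z*u - φ z)` (as a real number; junk value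
when the supremum is not finite). -/
noncomputable def fconj (φ : ℝ → ℝ) (u : ℝ) : ℝ := ⨆ z : ℝ, (z * u - φ z)

/-- `φ*(u) < ∞`, i.e. the defining supremum of the conjugate is finite. -/
def FiniteConj (φ : ℝ → ℝ) (u : ℝ) : Prop :=
  BddAbove (Set.range fun z => z * u - φ z)

/-- `g ∈ ∂φ(a)`: `g` is a subgradient of `φ` at `a`. -/
def IsSubgrad (φ : ℝ → ℝ) (a g : ℝ) : Prop :=
  ∀ b, φ a + g * (b - a) ≤ φ b

/-- `u ∈ ∂φ*(b)`: `u` is a subgradient of the conjugate `φ*` at `b`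
(the subgradient inequality being required at all points where `φ*` is finite). -/
def ConjSubgrad (φ : ℝ → ℝ) (b u : ℝ) : Prop :=
  FiniteConj φ b ∧ ∀ v, FiniteConj φ v → fconj φ b + u * (v - b) ≤ fconj φ v

/-- Dual feasibility: `φ_i*(-α_i) < ∞` for all `i`. -/
def Feas {n : ℕ} (φ : Fin n → ℝ → ℝ) (α : Fin n → ℝ) : Prop :=
  ∀ i, FiniteConj (φ i) (-(α i))

/-- `w(α) = (1/(λ n)) ∑ι α_i x_i`. -/
noncomputable def wvec {n d : ℕ} (lam : ℝ) (x : Fin n → EuclideanSpace ℝ (Fin d))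
    (α : Fin n → ℝ) : EuclideanSpace ℝ (Fin d) :=
  (1 / (lam * (n : ℝ))) • ∑ i, α i • x i

/-- The primal objective `P(w)`. -/
noncomputable def primalObj {n d : ℕ} (lam : ℝ) (x : Fin n → EuclideanSpace ℝ (Fin d))
    (φ : Fin n → ℝ → ℝ) (w : EuclideanSpace ℝ (Fin d)) : ℝ :=
  (1 / (n : ℝ)) * ∑ i, φ i ⟪x i, w⟫ + lam / 2 * ‖w‖ ^ 2

/-- The dual objective `D(α)`. -/
noncomputable def dualObj {n d : ℕ} (lam : ℝ) (x : Fin n → EuclideanSpace ℝ (Fin d))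
    (φ : Fin n → ℝ → ℝ) (α : Fin n → ℝ) : ℝ :=
  (1 / (n : ℝ)) * ∑ i, -(fconj (φ i) (-(α i))) - lam / 2 * ‖wvec lam x α‖ ^ 2

/-- The SDCA trajectory: `α^(0) = α0`, `α^(t+1) = step α^(t) (idx t)`. -/
noncomputable def traj {n : ℕ} (step : (Fin n → ℝ) → Fin n → (Fin n → ℝ))
    (α0 : Fin n → ℝ) (idx : ℕ → Fin n) : ℕ → (Fin n → ℝ)
  | 0 => α0
  | t + 1 => step (traj step α0 idx t) (idx t)

/-- Expectation over the first `t` coordinates of a uniformly random i.i.d. index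
sequence, applied to a function `g` of the index sequence (which should depend
only on the first `t` indices). -/
noncomputable def ExpIdx {n : ℕ} (hn : 0 < n) (t : ℕ) (g : (ℕ → Fin n) → ℝ) : ℝ :=
  (∑ idx : Fin t → Fin n,
      g (fun k => if h : k < t then idx ⟨k, h⟩ else (⟨0, hn⟩ : Fin n))) / (n : ℝ) ^ t

/-- Proposition 5 (second part): refined primal inequality. Under the refined
conjugate strong-convexity condition with moduli `γᵢ(·) ≥ 0`, setting
`γᵢ = γᵢ(w*ᵀxᵢ)`, for every `w`, every `i`, and every `aᵢ` with
`-aᵢ ∈ ∂φᵢ(wᵀxᵢ)`: `|(w* - w)ᵀxᵢ| ≥ γᵢ |aᵢ - α*ᵢ|`. -/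
theorem refined_primal_inequality
    (n d : ℕ) (hn : 1 ≤ n)
    (x : Fin n → EuclideanSpace ℝ (Fin d))
    (φ : Fin n → ℝ → ℝ) (hconv : ∀ i, ConvexOn ℝ Set.univ (φ i))
    (lam : ℝ) (hlam : 0 < lam)
    (γfun : Fin n → ℝ → ℝ) (hγ : ∀ i u, 0 ≤ γfun i u)
    (hrsc : ∀ i, ∀ a b u : ℝ, FiniteConj (φ i) (-a) → ConjSubgrad (φ i) (-b) u →
      γfun i u * (a - b) ^ 2 ≤ fconj (φ i) (-a) - fconj (φ i) (-b) + u * (a - b))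
    (wstar : EuclideanSpace ℝ (Fin d))
    (hwmin : ∀ w, primalObj lam x φ wstar ≤ primalObj lam x φ w)
    (αstar : Fin n → ℝ) (hstar_feas : Feas φ αstar)
    (hstar_max : ∀ β, Feas φ β → dualObj lam x φ β ≤ dualObj lam x φ αstar)
    (hws : wvec lam x αstar = wstar)
    (hsub_conj : ∀ i, ConjSubgrad (φ i) (-(αstar i)) ⟪x i, wstar⟫)
    (hsub : ∀ i, IsSubgrad (φ i) ⟪x i, wstar⟫ (-(αstar i)))
    (w : EuclideanSpace ℝ (Fin d)) (i : Fin n) (a : ℝ)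
    (ha : IsSubgrad (φ i) ⟪x i, w⟫ (-a)) :
    γfun i ⟪x i, wstar⟫ * |a - αstar i| ≤ |⟪x i, wstar - w⟫| := by
  set p : ℝ := ⟪x i, w⟫ with hp
  set q : ℝ := ⟪x i, wstar⟫ with hq
  have hfin_a : FiniteConj (φ i) (-a) := by
    refine ⟨-(φ i p) - a * p, ?_⟩
    rintro y ⟨z, rfl⟩
    simp only
    have h1 := ha z
    have h2 : -a * (z - p) = -a * z + a * p := by ring
    rw [h2] at h1
    linarith
  have hfa_le : fconj (φ i) (-a) ≤ -(φ i p) - a * p := by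
    apply ciSup_le
    intro z
    have h1 := ha z
    have h2 : -a * (z - p) = -a * z + a * p := by ring
    rw [h2] at h1
    linarith
  have hfs_ge : p * (-(αstar i)) - φ i p ≤ fconj (φ i) (-(αstar i)) :=
    le_ciSup (hstar_feas i) p
  have hrsc' := hrsc i a (αstar i) q hfin_a (hsub_conj i)
  have key : γfun i q * (a - αstar i) ^ 2 ≤ (q - p) * (a - αstar i) := by nlinarith
  have hqp : ⟪x i, wstar - w⟫ = q - p := by
    simp [hq, hp, inner_sub_right]
  rw [hqp]
  rcases eq_or_ne a (αstar i) with h | h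
  · simp [h, abs_nonneg]
  · have habs : 0 < |a - αstar i| := abs_pos.mpr (sub_ne_zero.mpr h)
    have hmain : γfun i q * |a - αstar i| * |a - αstar i| ≤ |q - p| * |a - αstar i| := by
      calc γfun i q * |a - αstar i| * |a - αstar i|
          = γfun i q * (a - αstar i) ^ 2 := by
            rw [mul_assoc, ← abs_mul, ← sq, abs_of_nonneg (sq_nonneg _)]
        _ ≤ (q - p) * (a - αstar i) := key
        _ ≤ |(q - p) * (a - αstar i)| := le_abs_self _
        _ = |q - p| * |a - αstar i| := abs_mul _ _
    exact le_of_mul_le_mul_right hmain habs
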